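/- Fix τ ∈ ℕ. There exists a constant c_τ > 0 such that for every n ∈ ℕ and every nonzero element w = Σ_{f ∈ P_τ*} c_f √f with integer coefficients satisfying |c_f| ≤ n, one has ‖w‖ ≥ c_τ · n^{-(2^τ − 1)}, where ‖·‖ denotes distance to the nearest integer. -/

import Mathlib

set_option maxRecDepth 10000
set_option maxHeartbeats 1000000

/-- The `i`-th prime (0-indexed: `nthPrime 0 = 2`). -/
noncomputable def nthPrime (i : ℕ) : ℕ := Nat.nth Nat.Prime i

/-- The squarefree divisor of `p_1 ⋯ p_τ` indexed by `s ∈ {0,1}^τ`. -/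
noncomputable def sqfDiv (τ : ℕ) (s : Fin τ → Bool) : ℕ :=
  ∏ j, if s j then nthPrime j else 1

/-- Distance from a real number to the nearest integer. -/
noncomputable def distNearestInt (x : ℝ) : ℝ := |x - round x|

noncomputable def RR (j : ℕ) : ℝ := Real.sqrt (nthPrime j)

noncomputable def Kf (τ : ℕ) : Subfield ℝ := Subfield.closure {x | ∃ j < τ, RR j = x}

lemma nthPrime_prime (j : ℕ) : (nthPrime j).Prime := Nat.prime_nth_prime j

lemma nthPrime_inj : Function.Injective nthPrime :=
  Nat.nth_injective Nat.infinite_setOf_prime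

lemma RR_nonneg (j : ℕ) : 0 ≤ RR j := Real.sqrt_nonneg _

lemma RR_sq (j : ℕ) : RR j ^ 2 = (nthPrime j : ℝ) :=
  Real.sq_sqrt (by positivity)

lemma sqrt_sqfDiv (τ : ℕ) (s : Fin τ → Bool) :
    Real.sqrt (sqfDiv τ s) = ∏ j, if s j then RR j else 1 := by
  have hnn : (0:ℝ) ≤ ∏ j, if s j then RR j else 1 :=
    Finset.prod_nonneg fun j _ => by split <;> [exact RR_nonneg _; norm_num]
  have : ((sqfDiv τ s : ℕ) : ℝ) = (∏ j, if s j then RR j else 1) ^ 2 := by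
    rw [sqfDiv, ← Finset.prod_pow]
    push_cast
    refine Finset.prod_congr rfl fun j _ => ?_
    split <;> simp [RR_sq]
  rw [this, Real.sqrt_sq hnn]
lemma quad_decomp (τ : ℕ) (hα : RR τ ∉ Kf τ) {x : ℝ} (hx : x ∈ Kf (τ+1)) :
    ∃ a ∈ Kf τ, ∃ b ∈ Kf τ, x = a + b * RR τ := by
  have hα2 : RR τ ^ 2 = (nthPrime τ : ℝ) := RR_sq τ
  have hpmem : ((nthPrime τ : ℝ)) ∈ Kf τ := natCast_mem _ _
  have inv_aux : ∀ a ∈ Kf τ, ∀ b ∈ Kf τ,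
      ∃ a' ∈ Kf τ, ∃ b' ∈ Kf τ, (a + b * RR τ)⁻¹ = a' + b' * RR τ := by
    intro a ha b hb
    by_cases hD : a ^ 2 - (nthPrime τ : ℝ) * b ^ 2 = 0
    · have hx0 : a + b * RR τ = 0 := by
        by_cases hb0 : b = 0
        · have ha2 : a ^ 2 = 0 := by rw [hb0] at hD; linarith
          have ha0 : a = 0 := by
            have := pow_eq_zero_iff (n := 2) (by norm_num) |>.1 ha2
            exact this
          simp [ha0, hb0]
        · exfalso
          have hsq : (RR τ - a / b) * (RR τ + a / b) = 0 := by
            field_simp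
            nlinarith [hα2, hD]
          rcases mul_eq_zero.1 hsq with h | h
          · have : RR τ = a / b := by linarith
            exact hα (this ▸ div_mem ha hb)
          · have : RR τ = -(a / b) := by linarith
            exact hα (this ▸ neg_mem (div_mem ha hb))
      rw [hx0]
      exact ⟨0, zero_mem _, 0, zero_mem _, by simp⟩
    · set D := a ^ 2 - (nthPrime τ : ℝ) * b ^ 2 with hDdef
      have key : (a + b * RR τ)⁻¹ = a / D + (-b / D) * RR τ := by
        refine inv_eq_of_mul_eq_one_right ?_
        have expand : (a + b * RR τ) * (a / D + -b / D * RR τ)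
            = (a ^ 2 - b ^ 2 * (RR τ ^ 2)) / D := by
          field_simp
          ring
        rw [expand, hα2, hDdef]
        exact (div_eq_one_iff_eq hD).2 (by ring)
      refine ⟨a / D, div_mem ha ?_, -b / D, div_mem (neg_mem hb) ?_, key⟩ <;>
        exact sub_mem (pow_mem ha 2) (mul_mem hpmem (pow_mem hb 2))
  set S : Subfield ℝ :=
    { carrier := {x : ℝ | ∃ a ∈ Kf τ, ∃ b ∈ Kf τ, x = a + b * RR τ}
      one_mem' := ⟨1, one_mem _, 0, zero_mem _, by ring⟩
      zero_mem' := ⟨0, zero_mem _, 0, zero_mem _, by ring⟩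
      add_mem' := by
        rintro x y ⟨a, ha, b, hb, rfl⟩ ⟨a', ha', b', hb', rfl⟩
        exact ⟨a + a', add_mem ha ha', b + b', add_mem hb hb', by ring⟩
      neg_mem' := by
        rintro x ⟨a, ha, b, hb, rfl⟩
        exact ⟨-a, neg_mem ha, -b, neg_mem hb, by ring⟩
      mul_mem' := by
        rintro x y ⟨a, ha, b, hb, rfl⟩ ⟨a', ha', b', hb', rfl⟩
        refine ⟨a * a' + b * b' * (nthPrime τ : ℝ),
          add_mem (mul_mem ha ha') (mul_mem (mul_mem hb hb') hpmem),
          a * b' + a' * b, add_mem (mul_mem ha hb') (mul_mem ha' hb), ?_⟩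
        rw [← hα2]; ring
      inv_mem' := by
        rintro x ⟨a, ha, b, hb, rfl⟩
        exact inv_aux a ha b hb } with hSdef
  have hle : Kf (τ+1) ≤ S := by
    rw [Kf, Subfield.closure_le]
    rintro x ⟨j, hj, rfl⟩
    rcases Nat.lt_succ_iff_lt_or_eq.1 hj with h | rfl
    · exact ⟨RR j, Subfield.subset_closure ⟨j, h, rfl⟩, 0, zero_mem _, by ring⟩
    · exact ⟨0, zero_mem _, 1, one_mem _, by ring⟩
  exact hle hx
lemma irr_sqrt {m : ℕ} (hm : 1 < m) (hsf : Squarefree m) : Irrational (Real.sqrt m) := by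
  refine irrational_sqrt_natCast_iff.mpr ?_
  rintro ⟨r, rfl⟩
  have : IsUnit r := hsf r (dvd_refl _)
  rw [Nat.isUnit_iff.1 this] at hm
  norm_num at hm

lemma sqrt_not_mem : ∀ τ : ℕ, ∀ m : ℕ, 1 < m → Squarefree m →
    (∀ j < τ, ¬ (nthPrime j ∣ m)) → Real.sqrt m ∉ Kf τ := by
  intro τ
  induction τ with
  | zero =>
    intro m hm hsf _ hmem
    have h0 : Kf 0 = ⊥ := by
      rw [Kf]
      convert Subfield.closure_empty
      simp
    rw [h0] at hmem
    have : Real.sqrt m ∈ (Rat.castHom ℝ).fieldRange :=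
      (bot_le : (⊥ : Subfield ℝ) ≤ (Rat.castHom ℝ).fieldRange) hmem
    rcases RingHom.mem_fieldRange.1 this with ⟨q, hq⟩
    exact irr_sqrt hm hsf ⟨q, hq⟩
  | succ τ ih =>
    intro m hm hsf hcop hmem
    -- RR τ ∉ Kf τ
    have hα : RR τ ∉ Kf τ := by
      refine ih (nthPrime τ) (nthPrime_prime τ).one_lt (nthPrime_prime τ).squarefree ?_
      intro j hj hdvd
      have := (Nat.prime_dvd_prime_iff_eq (nthPrime_prime j) (nthPrime_prime τ)).1 hdvd
      exact absurd (nthPrime_inj this) (Nat.ne_of_lt hj)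
    obtain ⟨a, ha, b, hb, hab⟩ := quad_decomp τ hα hmem
    have hsqm : (m : ℝ) = a ^ 2 + b ^ 2 * nthPrime τ + 2 * a * b * RR τ := by
      have : Real.sqrt m ^ 2 = (m : ℝ) := Real.sq_sqrt (by positivity)
      rw [← this, hab]
      rw [← RR_sq τ]
      ring
    by_cases hb0 : b = 0
    · refine ih m hm hsf (fun j hj => hcop j (Nat.lt_succ_of_lt hj)) ?_
      rw [hab, hb0]
      simpa using ha
    · by_cases ha0 : a = 0
      · -- sqrt m = b * RR τ, so sqrt (m * p) = b * p ∈ Kf τ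
        have hpm : ¬ (nthPrime τ ∣ m) := hcop τ (Nat.lt_succ_self τ)
        have hco : Nat.Coprime m (nthPrime τ) :=
          (((nthPrime_prime τ).coprime_iff_not_dvd).mpr hpm).symm
        have hkey : Real.sqrt (m * nthPrime τ) = b * nthPrime τ := by
          have h1 : Real.sqrt ((m : ℕ) * nthPrime τ) = Real.sqrt m * RR τ := by
            push_cast
            rw [Real.sqrt_mul (by positivity)]
            rfl
          rw [h1, hab, ha0]
          rw [← RR_sq τ]
          ring
        have hplt : 1 < m * nthPrime τ := by
          calc 1 < m := hm
          _ ≤ m * nthPrime τ := Nat.le_mul_of_pos_right m (nthPrime_prime τ).pos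
        refine ih (m * nthPrime τ) hplt
          ((Nat.squarefree_mul hco).mpr ⟨hsf, (nthPrime_prime τ).squarefree⟩) ?_ ?_
        · intro j hj hdvd
          rcases ((Nat.Prime.dvd_mul (nthPrime_prime j)).1 hdvd) with h | h
          · exact hcop j (Nat.lt_succ_of_lt hj) h
          · have := (Nat.prime_dvd_prime_iff_eq (nthPrime_prime j) (nthPrime_prime τ)).1 h
            exact absurd (nthPrime_inj this) (Nat.ne_of_lt hj)
        · rw [show ((m * nthPrime τ : ℕ) : ℝ) = (m : ℝ) * (nthPrime τ : ℝ) by push_cast; ring, hkey]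
          exact mul_mem hb (natCast_mem _ _)
      · -- RR τ ∈ Kf τ
        have h2ab : (2 * a * b) * RR τ = (m : ℝ) - a ^ 2 - b ^ 2 * nthPrime τ := by
          linarith [hsqm]
        have hne : (2 * a * b) ≠ 0 := by
          intro h
          rcases mul_eq_zero.1 h with h' | h'
          · rcases mul_eq_zero.1 h' with h'' | h''
            · norm_num at h''
            · exact ha0 h''
          · exact hb0 h'
        have : RR τ = ((m : ℝ) - a ^ 2 - b ^ 2 * nthPrime τ) / (2 * a * b) := by
          field_simp at h2ab ⊢
          linarith [h2ab]
        refine hα ?_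
        rw [this]
        refine div_mem (sub_mem (sub_mem (natCast_mem _ _) (pow_mem ha 2))
          (mul_mem (pow_mem hb 2) (natCast_mem _ _)))
          (mul_mem (mul_mem ?_ ha) hb)
        exact_mod_cast natCast_mem (Kf τ) 2
lemma RR_not_mem (τ : ℕ) : RR τ ∉ Kf τ := by
  refine sqrt_not_mem τ (nthPrime τ) (nthPrime_prime τ).one_lt (nthPrime_prime τ).squarefree ?_
  intro j hj hdvd
  have := (Nat.prime_dvd_prime_iff_eq (nthPrime_prime j) (nthPrime_prime τ)).1 hdvd
  exact absurd (nthPrime_inj this) (Nat.ne_of_lt hj)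

lemma sqrt_sqfDiv_mem (τ : ℕ) (s : Fin τ → Bool) : Real.sqrt (sqfDiv τ s) ∈ Kf τ := by
  rw [sqrt_sqfDiv]
  refine prod_mem fun j _ => ?_
  split
  · exact Subfield.subset_closure ⟨(j : ℕ), j.isLt, rfl⟩
  · exact one_mem _

lemma sqfDiv_snoc (τ : ℕ) (t : Fin τ → Bool) (b : Bool) :
    sqfDiv (τ+1) (Fin.snoc t b) = sqfDiv τ t * (if b then nthPrime τ else 1) := by
  rw [sqfDiv, Fin.prod_univ_castSucc]
  congr 1
  · refine Finset.prod_congr rfl fun j _ => ?_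
    rw [Fin.snoc_castSucc]
    rfl
  · rw [Fin.snoc_last]
    rfl

lemma sqrt_sqfDiv_snoc (τ : ℕ) (t : Fin τ → Bool) (b : Bool) :
    Real.sqrt (sqfDiv (τ+1) (Fin.snoc t b)) =
      Real.sqrt (sqfDiv τ t) * (if b then RR τ else 1) := by
  rw [sqfDiv_snoc]
  push_cast
  rw [Real.sqrt_mul (by positivity)]
  congr 1
  cases b <;> simp [RR]

lemma li : ∀ τ : ℕ, ∀ c : (Fin τ → Bool) → ℤ,
    (∑ s, (c s : ℝ) * Real.sqrt (sqfDiv τ s)) = 0 → ∀ s, c s = 0 := by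
  intro τ
  induction τ with
  | zero =>
    intro c hc s
    have huniv : (Finset.univ : Finset (Fin 0 → Bool)) = {s} := by
      apply Finset.eq_singleton_iff_unique_mem.2
      exact ⟨Finset.mem_univ _, fun t _ => funext fun j => j.elim0⟩
    rw [huniv, Finset.sum_singleton] at hc
    have : Real.sqrt (sqfDiv 0 s) = 1 := by
      rw [sqrt_sqfDiv]; simp
    rw [this, mul_one] at hc
    exact_mod_cast hc
  | succ τ ih =>
    intro c hc
    have hsplit : (∑ s, (c s : ℝ) * Real.sqrt (sqfDiv (τ+1) s)) =
        (∑ t, (c (Fin.snoc t false) : ℝ) * Real.sqrt (sqfDiv τ t)) +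
        (∑ t, (c (Fin.snoc t true) : ℝ) * Real.sqrt (sqfDiv τ t)) * RR τ := by
      rw [← Equiv.sum_comp (Fin.snocEquiv (fun _ => Bool))
        (fun s => (c s : ℝ) * Real.sqrt (sqfDiv (τ+1) s)), Fintype.sum_prod_type]
      rw [Finset.sum_comm]
      simp only [Fintype.sum_bool, Fin.snocEquiv, Equiv.coe_fn_mk, sqrt_sqfDiv_snoc,
        if_true, if_false, mul_one]
      rw [Finset.sum_add_distrib, Finset.sum_mul, add_comm]
      congr 1
      · exact Finset.sum_congr rfl fun t _ => by norm_num
      · exact Finset.sum_congr rfl fun t _ => by ring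
    rw [hsplit] at hc
    set A := (∑ t, (c (Fin.snoc t false) : ℝ) * Real.sqrt (sqfDiv τ t)) with hA
    set B := (∑ t, (c (Fin.snoc t true) : ℝ) * Real.sqrt (sqfDiv τ t)) with hB
    have hAm : A ∈ Kf τ := Subfield.sum_mem _ fun t _ =>
      mul_mem (intCast_mem _ _) (sqrt_sqfDiv_mem τ t)
    have hBm : B ∈ Kf τ := Subfield.sum_mem _ fun t _ =>
      mul_mem (intCast_mem _ _) (sqrt_sqfDiv_mem τ t)
    have hB0 : B = 0 := by
      by_contra hB0
      have : RR τ = -A / B := by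
        field_simp
        linarith [hc]
      exact RR_not_mem τ (this ▸ div_mem (neg_mem hAm) hBm)
    have hA0 : A = 0 := by
      rw [hB0] at hc
      linarith [hc]
    have hbz := ih _ hB0
    have haz := ih _ hA0
    intro s
    have : s = Fin.snoc (Fin.init s) (s (Fin.last τ)) := (Fin.snoc_init_self s).symm
    rw [this]
    cases hb : s (Fin.last τ)
    · exact haz (Fin.init s)
    · exact hbz (Fin.init s)
open MvPolynomial
noncomputable def flipv (τ : ℕ) (j0 : Fin τ) : Fin τ → MvPolynomial (Fin τ) ℤ :=
  fun j => if j = j0 then -X j else X j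

lemma flip_monomial (j0 : Fin τ) (m : Fin τ →₀ ℕ) (a : ℤ) :
    bind₁ (flipv τ j0) (monomial m a) = C ((-1 : ℤ) ^ (m j0)) * monomial m a := by
  rw [bind₁_monomial]
  have h1 : ∏ i ∈ m.support, (flipv τ j0 i) ^ m i
      = (∏ i ∈ m.support, (if i = j0 then (-1 : MvPolynomial (Fin τ) ℤ) ^ m j0 else 1))
        * ∏ i ∈ m.support, (X i) ^ m i := by
    rw [← Finset.prod_mul_distrib]
    refine Finset.prod_congr rfl fun i _ => ?_
    by_cases h : i = j0
    · subst h
      rw [if_pos rfl, show flipv τ i i = -X i from if_pos rfl, neg_pow]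
    · rw [if_neg h, show flipv τ j0 i = X i from if_neg h, one_mul]
  rw [h1]
  have h2 : (∏ i ∈ m.support, (if i = j0 then (-1 : MvPolynomial (Fin τ) ℤ) ^ m j0 else 1))
      = (-1 : MvPolynomial (Fin τ) ℤ) ^ m j0 := by
    by_cases hj : j0 ∈ m.support
    · rw [Finset.prod_ite_eq' m.support j0 (fun _ => (-1 : MvPolynomial (Fin τ) ℤ) ^ m j0),
        if_pos hj]
    · have hz : m j0 = 0 := Finsupp.notMem_support_iff.1 hj
      rw [hz]
      simp
  rw [h2, monomial_eq]
  have : (C ((-1 : ℤ) ^ m j0) : MvPolynomial (Fin τ) ℤ) = (-1 : MvPolynomial (Fin τ) ℤ) ^ m j0 := by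
    simp
  rw [this, Finsupp.prod]
  ring

lemma coeff_flip (j0 : Fin τ) (P : MvPolynomial (Fin τ) ℤ) (m : Fin τ →₀ ℕ) :
    coeff m (bind₁ (flipv τ j0) P) = (-1 : ℤ) ^ (m j0) * coeff m P := by
  conv_lhs => rw [P.as_sum, map_sum]
  rw [coeff_sum]
  have : ∀ m' ∈ P.support, coeff m (bind₁ (flipv τ j0) (monomial m' (coeff m' P)))
      = if m' = m then (-1 : ℤ) ^ (m' j0) * coeff m' P else 0 := by
    intro m' _
    rw [flip_monomial, coeff_C_mul, coeff_monomial]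
    split <;> simp
  rw [Finset.sum_congr rfl this, Finset.sum_ite_eq' P.support m
    (fun m' => (-1 : ℤ) ^ (m' j0) * coeff m' P)]
  split
  · rfl
  · rw [MvPolynomial.notMem_support_iff.1 (by assumption)]
    ring

lemma even_of_flip_fixed (j0 : Fin τ) (P : MvPolynomial (Fin τ) ℤ)
    (h : bind₁ (flipv τ j0) P = P) (m : Fin τ →₀ ℕ) (hm : coeff m P ≠ 0) : Even (m j0) := by
  rcases Nat.even_or_odd (m j0) with he | ho
  · exact he
  · exfalso
    have := coeff_flip j0 P m
    rw [h, Odd.neg_one_pow ho] at this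
    apply hm
    linarith [this]
noncomputable def Fpoly (τ : ℕ) (c : (Fin τ → Bool) → ℤ) (d : ℤ) (ε : Fin τ → Bool) :
    MvPolynomial (Fin τ) ℤ :=
  (∑ s, C (c s) * ∏ j, (if s j then (if ε j then -X j else X j) else 1)) - C d

noncomputable def Qpoly (τ : ℕ) (c : (Fin τ → Bool) → ℤ) (d : ℤ) : MvPolynomial (Fin τ) ℤ :=
  ∏ ε, Fpoly τ c d ε

noncomputable def flipε (τ : ℕ) (j0 : Fin τ) (ε : Fin τ → Bool) : Fin τ → Bool :=
  Function.update ε j0 (!ε j0)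

lemma flipε_invol (τ : ℕ) (j0 : Fin τ) : Function.Involutive (flipε τ j0) := by
  intro ε
  funext j
  by_cases h : j = j0
  · subst h; simp [flipε, Function.update]
  · simp [flipε, Function.update, h]

lemma flip_Fpoly (τ : ℕ) (c : (Fin τ → Bool) → ℤ) (d : ℤ) (j0 : Fin τ) (ε : Fin τ → Bool) :
    bind₁ (flipv τ j0) (Fpoly τ c d ε) = Fpoly τ c d (flipε τ j0 ε) := by
  rw [Fpoly, Fpoly, map_sub, bind₁_C_right, map_sum]
  congr 1
  refine Finset.sum_congr rfl fun s _ => ?_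
  rw [map_mul, bind₁_C_right, map_prod]
  congr 1
  refine Finset.prod_congr rfl fun j _ => ?_
  by_cases hs : s j
  · rw [if_pos hs, if_pos hs]
    by_cases hj : j = j0
    · subst hj
      have hu : flipε τ j ε j = !ε j := by simp [flipε]
      rw [hu]
      cases hε : ε j
      · rw [if_neg (by simp), if_pos (by simp), bind₁_X_right,
          show flipv τ j j = -X j from if_pos rfl]
      · rw [if_pos (by simp), if_neg (by simp), map_neg, bind₁_X_right,
          show flipv τ j j = -X j from if_pos rfl, neg_neg]
    · have hu : flipε τ j0 ε j = ε j := by simp [flipε, Function.update, hj]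
      rw [hu]
      cases hε : ε j
      · rw [if_neg (by norm_num : ¬ (false = true)), bind₁_X_right,
          show flipv τ j0 j = X j from if_neg hj]
      · rw [if_pos rfl, map_neg, bind₁_X_right,
          show flipv τ j0 j = X j from if_neg hj]
  · rw [if_neg hs, if_neg hs, map_one]

lemma flip_Qpoly (τ : ℕ) (c : (Fin τ → Bool) → ℤ) (d : ℤ) (j0 : Fin τ) :
    bind₁ (flipv τ j0) (Qpoly τ c d) = Qpoly τ c d := by
  rw [Qpoly, map_prod]
  rw [Finset.prod_congr rfl fun ε _ => flip_Fpoly τ c d j0 ε]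
  exact Equiv.prod_comp ((flipε_invol τ j0).toPerm) (Fpoly τ c d)
noncomputable def RRf (τ : ℕ) : Fin τ → ℝ := fun j => RR j

noncomputable def Wval (τ : ℕ) (c : (Fin τ → Bool) → ℤ) (ε : Fin τ → Bool) : ℝ :=
  ∑ s, (c s : ℝ) * ∏ j, (if s j then (if ε j then -(RR (j:ℕ)) else RR (j:ℕ)) else 1)

lemma aeval_Qpoly (τ : ℕ) (c : (Fin τ → Bool) → ℤ) (d : ℤ) :
    aeval (RRf τ) (Qpoly τ c d) = ∏ ε, (Wval τ c ε - (d : ℝ)) := by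
  rw [Qpoly, map_prod]
  refine Finset.prod_congr rfl fun ε _ => ?_
  rw [Fpoly, map_sub, map_sum, Wval]
  congr 1
  · refine Finset.sum_congr rfl fun s _ => ?_
    rw [map_mul, aeval_C, algebraMap_int_eq, map_prod]
    congr 1
    refine Finset.prod_congr rfl fun j _ => ?_
    by_cases hs : s j
    · rw [if_pos hs, if_pos hs]
      cases hε : ε j
      · rw [if_neg (by norm_num : ¬ (false = true)), aeval_X]
        rfl
      · rw [if_pos rfl, map_neg, aeval_X]
        rfl
    · rw [if_neg hs, if_neg hs, map_one]
  · rw [aeval_C, algebraMap_int_eq]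
    simp

lemma int_valued (τ : ℕ) (Q : MvPolynomial (Fin τ) ℤ)
    (hev : ∀ m : Fin τ →₀ ℕ, coeff m Q ≠ 0 → ∀ j, Even (m j)) :
    ∃ k : ℤ, aeval (RRf τ) Q = (k : ℝ) := by
  refine ⟨∑ m ∈ Q.support, coeff m Q * ∏ j : Fin τ, (nthPrime (j:ℕ) : ℤ) ^ (m j / 2), ?_⟩
  have hQ : aeval (RRf τ) Q = ∑ m ∈ Q.support, aeval (RRf τ) (monomial m (coeff m Q)) := by
    nth_rewrite 1 [Q.as_sum]
    rw [map_sum]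
  rw [hQ]
  push_cast
  refine Finset.sum_congr rfl fun m hm => ?_
  rw [aeval_monomial, algebraMap_int_eq,
    Finsupp.prod_fintype _ _ (fun j => pow_zero _)]
  have heq : ∀ j : Fin τ, (RRf τ j) ^ m j = ((nthPrime (j:ℕ) : ℝ)) ^ (m j / 2) := by
    intro j
    have he : Even (m j) := hev m (MvPolynomial.mem_support_iff.1 hm) j
    rw [show m j = 2 * (m j / 2) from (Nat.two_mul_div_two_of_even he).symm, pow_mul]
    rw [show RRf τ j = RR (j:ℕ) from rfl, RR_sq]
    rw [Nat.mul_div_cancel_left _ (by norm_num)]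
  rw [Finset.prod_congr rfl fun j _ => heq j]
  simp
theorem stmt_13 (τ : ℕ) :
    ∃ cτ : ℝ, 0 < cτ ∧ ∀ n : ℕ, 1 ≤ n → ∀ c : (Fin τ → Bool) → ℤ,
      c (fun _ => false) = 0 →
      (∀ s, |c s| ≤ (n : ℤ)) →
      (∑ s, (c s : ℝ) * Real.sqrt (sqfDiv τ s)) ≠ 0 →
      cτ * (n : ℝ) ^ (-(2 ^ τ - 1 : ℤ)) ≤
        distNearestInt (∑ s, (c s : ℝ) * Real.sqrt (sqfDiv τ s)) := by
  classical
  set M : ℝ := ∑ s : Fin τ → Bool, Real.sqrt (sqfDiv τ s) with hMdef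
  have hM0 : 0 ≤ M := Finset.sum_nonneg fun s _ => Real.sqrt_nonneg _
  have hB : (0:ℝ) < 2 * M + 1 := by linarith
  set E : ℤ := 2 ^ τ - 1 with hEdef
  set e : ℕ := 2 ^ τ - 1 with hedef
  have hEe : E = (e : ℤ) := by
    rw [hedef, hEdef, Nat.cast_sub (Nat.one_le_two_pow)]
    push_cast
    ring
  refine ⟨(2 * M + 1) ^ (-E), zpow_pos hB _, ?_⟩
  intro n hn c hc0 hbd hw
  set w : ℝ := ∑ s, (c s : ℝ) * Real.sqrt (sqfDiv τ s) with hwdef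
  set d : ℤ := round w with hddef
  -- |Wval| bounds
  have habs : ∀ (ε : Fin τ → Bool) (s : Fin τ → Bool),
      |∏ j, (if s j then (if ε j then -(RR (j:ℕ)) else RR (j:ℕ)) else 1)|
        = Real.sqrt (sqfDiv τ s) := by
    intro ε s
    rw [Finset.abs_prod, sqrt_sqfDiv]
    refine Finset.prod_congr rfl fun j _ => ?_
    by_cases hs : s j
    · rw [if_pos hs, if_pos hs]
      cases hε : ε j
      · rw [if_neg (by norm_num : ¬ (false = true)), abs_of_nonneg (RR_nonneg _)]
      · rw [if_pos rfl, abs_neg, abs_of_nonneg (RR_nonneg _)]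
    · rw [if_neg hs, if_neg hs, abs_one]
  have hWbd : ∀ ε : Fin τ → Bool, |Wval τ c ε| ≤ (n : ℝ) * M := by
    intro ε
    rw [Wval]
    refine le_trans (Finset.abs_sum_le_sum_abs _ _) ?_
    rw [hMdef, Finset.mul_sum]
    refine Finset.sum_le_sum fun s _ => ?_
    rw [abs_mul, habs ε s]
    refine mul_le_mul_of_nonneg_right ?_ (Real.sqrt_nonneg _)
    rw [Int.cast_abs.symm]
    exact_mod_cast hbd s
  -- Wval at ε = false is w
  have hW0 : Wval τ c (fun _ => false) = w := by
    rw [Wval, hwdef]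
    refine Finset.sum_congr rfl fun s _ => ?_
    rw [sqrt_sqfDiv]
    norm_num
  -- bound on each factor
  have hfac_bd : ∀ ε : Fin τ → Bool, |Wval τ c ε - (d:ℝ)| ≤ (n:ℝ) * (2 * M + 1) := by
    intro ε
    have h1 : |(d:ℝ)| ≤ |w| + 1/2 := by
      have := abs_sub_round w
      rw [hddef]
      have : |(round w : ℝ)| = |w - (w - round w)| := by ring_nf
      calc |(round w : ℝ)| = |w - (w - round w)| := by ring_nf
        _ ≤ |w| + |w - round w| := by exact abs_sub _ _
        _ ≤ |w| + 1/2 := by linarith [abs_sub_round w]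
    have h2 : |w| ≤ (n:ℝ) * M := hW0 ▸ hWbd (fun _ => false)
    have hn1 : (1:ℝ) ≤ n := by exact_mod_cast hn
    calc |Wval τ c ε - (d:ℝ)| ≤ |Wval τ c ε| + |(d:ℝ)| := abs_sub _ _
      _ ≤ (n:ℝ) * M + ((n:ℝ) * M + 1/2) := by linarith [hWbd ε]
      _ ≤ (n:ℝ) * (2 * M + 1) := by nlinarith
  -- nonvanishing of factors
  have hfac_ne : ∀ ε : Fin τ → Bool, Wval τ c ε - (d:ℝ) ≠ 0 := by
    intro ε h
    set sg : (Fin τ → Bool) → ℤ := fun s => ∏ j, (if s j && ε j then -1 else 1) with hsg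
    have hsg_ne : ∀ s, sg s ≠ 0 := by
      intro s
      rw [hsg]
      refine Finset.prod_ne_zero_iff.2 fun j _ => ?_
      split <;> norm_num
    set D : (Fin τ → Bool) → ℤ :=
      fun s => sg s * c s - (if s = (fun _ => false) then d else 0) with hD
    have hsum : ∑ s, (D s : ℝ) * Real.sqrt (sqfDiv τ s) = Wval τ c ε - (d:ℝ) := by
      rw [Wval]
      have expand : ∀ s : Fin τ → Bool, (D s : ℝ) * Real.sqrt (sqfDiv τ s)
          = (c s : ℝ) * ∏ j, (if s j then (if ε j then -(RR (j:ℕ)) else RR (j:ℕ)) else 1)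
            - (if s = (fun _ => false) then (d:ℝ) * Real.sqrt (sqfDiv τ s) else 0) := by
        intro s
        rw [hD]
        push_cast [apply_ite (fun z : ℤ => (z : ℝ))]
        rw [sub_mul]
        congr 1
        · have hsgc : ((sg s : ℝ)) = ∏ j, (if s j && ε j then (-1:ℝ) else 1) := by
            rw [hsg]
            push_cast [apply_ite (fun z : ℤ => (z : ℝ))]
            rfl
          rw [mul_comm ((sg s : ℝ)) ((c s : ℝ)), mul_assoc, hsgc, sqrt_sqfDiv,
            ← Finset.prod_mul_distrib]
          congr 1
          refine Finset.prod_congr rfl fun j _ => ?_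
          by_cases hs : s j
          · cases hε : ε j
            · simp [hs, hε]
            · simp [hs, hε]
          · simp [hs]
        · split <;> simp
      rw [Finset.sum_congr rfl fun s _ => expand s, Finset.sum_sub_distrib]
      congr 1
      rw [Finset.sum_ite_eq' Finset.univ (fun _ => false)
        (fun s => (d:ℝ) * Real.sqrt (sqfDiv τ s)), if_pos (Finset.mem_univ _)]
      have : Real.sqrt (sqfDiv τ (fun _ => false)) = 1 := by
        rw [sqrt_sqfDiv]
        simp
      rw [this, mul_one]
    have hDz := li τ D (by rw [hsum, h])
    have hcz : ∀ s, c s = 0 := by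
      intro s
      by_cases hs0 : s = (fun _ => false)
      · rw [hs0]; exact hc0
      · have := hDz s
        rw [hD] at this
        simp only [if_neg hs0, sub_zero] at this
        rcases mul_eq_zero.1 this with h' | h'
        · exact absurd h' (hsg_ne s)
        · exact h'
    apply hw
    rw [hwdef]
    refine Finset.sum_eq_zero fun s _ => ?_
    rw [hcz s]
    simp
  -- integrality
  have hev : ∀ m : Fin τ →₀ ℕ, MvPolynomial.coeff m (Qpoly τ c d) ≠ 0 → ∀ j, Even (m j) :=
    fun m hm j => even_of_flip_fixed j (Qpoly τ c d) (flip_Qpoly τ c d j) m hm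
  obtain ⟨k, hk⟩ := int_valued τ (Qpoly τ c d) hev
  rw [aeval_Qpoly] at hk
  have hk_ne : k ≠ 0 := by
    intro h0
    rw [h0] at hk
    norm_num at hk
    rcases Finset.prod_eq_zero_iff.1 hk with ⟨ε, _, hε⟩
    exact hfac_ne ε (by linarith [hε, sub_eq_zero.2 hε.symm] )
  have hk1 : (1:ℝ) ≤ |∏ ε, (Wval τ c ε - (d:ℝ))| := by
    rw [hk]
    exact_mod_cast Int.one_le_abs hk_ne
  -- split off the ε = false factor
  set ε0 : Fin τ → Bool := fun _ => false with hε0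
  have hsplit : ∏ ε, (Wval τ c ε - (d:ℝ))
      = (w - (d:ℝ)) * ∏ ε ∈ Finset.univ.erase ε0, (Wval τ c ε - (d:ℝ)) := by
    rw [← Finset.mul_prod_erase Finset.univ _ (Finset.mem_univ ε0), hW0]
  have hcard : (Finset.univ.erase ε0).card = e := by
    rw [Finset.card_erase_of_mem (Finset.mem_univ _), Finset.card_univ, hedef]
    congr 1
    rw [Fintype.card_fun]
    simp
  have herase_bd : ∏ ε ∈ Finset.univ.erase ε0, |Wval τ c ε - (d:ℝ)|
      ≤ ((n:ℝ) * (2 * M + 1)) ^ e := by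
    calc ∏ ε ∈ Finset.univ.erase ε0, |Wval τ c ε - (d:ℝ)|
        ≤ ∏ _ε ∈ Finset.univ.erase ε0, ((n:ℝ) * (2 * M + 1)) :=
          Finset.prod_le_prod (fun _ _ => abs_nonneg _) (fun ε _ => hfac_bd ε)
      _ = ((n:ℝ) * (2 * M + 1)) ^ e := by rw [Finset.prod_const, hcard]
  have hXpos : (0:ℝ) < (n:ℝ) * (2 * M + 1) := by
    have : (0:ℝ) < n := by exact_mod_cast hn
    positivity
  have hmain : 1 ≤ |w - (d:ℝ)| * ((n:ℝ) * (2 * M + 1)) ^ e := by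
    calc (1:ℝ) ≤ |∏ ε, (Wval τ c ε - (d:ℝ))| := hk1
      _ = |w - (d:ℝ)| * ∏ ε ∈ Finset.univ.erase ε0, |Wval τ c ε - (d:ℝ)| := by
          rw [hsplit, abs_mul, Finset.abs_prod]
      _ ≤ |w - (d:ℝ)| * ((n:ℝ) * (2 * M + 1)) ^ e := by
          exact mul_le_mul_of_nonneg_left herase_bd (abs_nonneg _)
  have hgoal : (2 * M + 1) ^ (-E) * (n:ℝ) ^ (-E) = (((n:ℝ) * (2 * M + 1)) ^ e)⁻¹ := by
    rw [← mul_zpow, zpow_neg, hEe, zpow_natCast]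
    ring_nf
  have hfin : (((n:ℝ) * (2 * M + 1)) ^ e)⁻¹ ≤ |w - (d:ℝ)| := by
    have hpow : (0:ℝ) < ((n:ℝ) * (2 * M + 1)) ^ e := pow_pos hXpos e
    rw [inv_le_iff_one_le_mul₀ hpow]
    linarith [hmain]
  rw [distNearestInt, ← hddef]
  calc (2 * M + 1) ^ (-E) * (n:ℝ) ^ (-E) = (((n:ℝ) * (2 * M + 1)) ^ e)⁻¹ := hgoal
    _ ≤ |w - (d:ℝ)| := hfin
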